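/- Let n ≥ 1 and 1 ≤ B ≤ n be integers, let L > 0 and μ_F > 0, and for i ∈ {1, …, n} let f_i : E → ℝ be convex, differentiable and L-smooth. Set f = (1/n)·Σ_{i=1}^n f_i and suppose x* ∈ E satisfies ∇f(x*) = 0. Fix points w, x̂ ∈ E. For each subset S ⊆ {1, …, n} with |S| = B, set f_S = (1/B)·Σ_{i∈S} f_i and define F_S : E → ℝ by F_S(x) = f_S(x) + ⟨x, ∇f(w) − ∇f_S(w)⟩ + (μ_F/2)‖x − x̂‖², with infimum F_S* = inf_{y} F_S(y). Then, averaging uniformly over all such subsets S (there are N = C(n, B) of them): (1/N)·Σ_S (F_S(x̂) − F_S*) ≤ f(x̂) − f(x*) + (1/(2μ_F))·(1/N)·Σ_S ‖∇f_S(w) − ∇f_S(x*)‖². -/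

import Mathlib

open Finset RealInnerProductSpace

/-- The minibatch gradient `∇f_S(y) = (1/B)·Σ_{i∈S} ∇f_i(y)`. -/
noncomputable def batchGrad {d n : ℕ} (B : ℕ)
    (G : Fin n → EuclideanSpace ℝ (Fin d) → EuclideanSpace ℝ (Fin d))
    (S : Finset (Fin n)) (y : EuclideanSpace ℝ (Fin d)) : EuclideanSpace ℝ (Fin d) :=
  (B : ℝ)⁻¹ • ∑ i ∈ S, G i y

/-- The proxy function
`F_S(x) = f_S(x) + ⟨x, ∇f(w) − ∇f_S(w)⟩ + (μ_F/2)‖x − x̂‖²`, where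
`f_S = (1/B)·Σ_{i∈S} f_i` and `∇f(w) = (1/n)·Σ_{i=1}^n ∇f_i(w)`. -/
noncomputable def proxyF {d n : ℕ} (B : ℕ) (μF : ℝ)
    (f : Fin n → EuclideanSpace ℝ (Fin d) → ℝ)
    (G : Fin n → EuclideanSpace ℝ (Fin d) → EuclideanSpace ℝ (Fin d))
    (w xhat : EuclideanSpace ℝ (Fin d)) (S : Finset (Fin n))
    (x : EuclideanSpace ℝ (Fin d)) : ℝ :=
  (B : ℝ)⁻¹ * ∑ i ∈ S, f i x +
    ⟪x, ((n : ℝ)⁻¹ • ∑ i, G i w) - batchGrad B G S w⟫ +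
    μF / 2 * ‖x - xhat‖ ^ 2


lemma aux_card {n B : ℕ} (hB : 1 ≤ B) (i : Fin n) :
    ((Finset.powersetCard B (Finset.univ : Finset (Fin n))).filter (fun S => i ∈ S)).card
      = (n - 1).choose (B - 1) := by
  classical
  have h : ((Finset.powersetCard B (Finset.univ : Finset (Fin n))).filter (fun S => i ∈ S)).card
      = (Finset.powersetCard (B - 1) (Finset.univ.erase i)).card := by
    apply Finset.card_nbij' (fun S => S.erase i) (fun T => insert i T)
    · intro S hS
      simp only [Finset.mem_coe, Finset.mem_filter, Finset.mem_powersetCard] at hS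
      rw [Finset.mem_coe, Finset.mem_powersetCard]
      refine ⟨fun x hx => ?_, ?_⟩
      · rcases Finset.mem_erase.mp hx with ⟨hne, _⟩
        exact Finset.mem_erase.mpr ⟨hne, Finset.mem_univ x⟩
      · rw [Finset.card_erase_of_mem hS.2, hS.1.2]
    · intro T hT
      rw [Finset.mem_coe, Finset.mem_powersetCard] at hT
      have hiT : i ∉ T := fun h => by
        have := hT.1 h
        exact (Finset.mem_erase.mp this).1 rfl
      simp only [Finset.mem_coe, Finset.mem_filter, Finset.mem_powersetCard]
      refine ⟨⟨Finset.subset_univ _, ?_⟩, Finset.mem_insert_self i T⟩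
      rw [Finset.card_insert_of_notMem hiT, hT.2]
      omega
    · intro S hS
      simp only [Finset.mem_coe, Finset.mem_filter] at hS
      exact Finset.insert_erase hS.2
    · intro T hT
      rw [Finset.mem_coe, Finset.mem_powersetCard] at hT
      have hiT : i ∉ T := fun h => (Finset.mem_erase.mp (hT.1 h)).1 rfl
      exact Finset.erase_insert hiT
  rw [h, Finset.card_powersetCard]
  congr 1
  rw [Finset.card_erase_of_mem (Finset.mem_univ i), Finset.card_univ, Fintype.card_fin]

lemma aux_sum {M : Type*} [AddCommMonoid M] {n B : ℕ} (hB : 1 ≤ B) (v : Fin n → M) :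
    ∑ S ∈ Finset.powersetCard B (Finset.univ : Finset (Fin n)), ∑ i ∈ S, v i
      = ((n - 1).choose (B - 1)) • ∑ i, v i := by
  classical
  calc ∑ S ∈ Finset.powersetCard B (Finset.univ : Finset (Fin n)), ∑ i ∈ S, v i
      = ∑ S ∈ Finset.powersetCard B (Finset.univ : Finset (Fin n)),
          ∑ i : Fin n, if i ∈ S then v i else 0 := by
        refine Finset.sum_congr rfl fun S _ => ?_
        rw [Finset.sum_ite_mem, Finset.univ_inter]
    _ = ∑ i : Fin n, ∑ S ∈ Finset.powersetCard B (Finset.univ : Finset (Fin n)),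
          if i ∈ S then v i else 0 := Finset.sum_comm
    _ = ∑ i : Fin n, ((n - 1).choose (B - 1)) • v i := by
        refine Finset.sum_congr rfl fun i _ => ?_
        rw [← Finset.sum_filter, Finset.sum_const, aux_card hB]
    _ = ((n - 1).choose (B - 1)) • ∑ i, v i := (Finset.smul_sum).symm

lemma aux_var {E : Type*} [NormedAddCommGroup E] [InnerProductSpace ℝ E]
    {ι : Type*} [DecidableEq ι] (P : Finset ι) (X : ι → E) (m : E)
    (hm : (P.card : ℝ) • m = ∑ S ∈ P, X S) :
    ∑ S ∈ P, ‖X S - m‖ ^ 2 ≤ ∑ S ∈ P, ‖X S‖ ^ 2 := by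
  have expand : ∀ S, ‖X S - m‖ ^ 2 = ‖X S‖ ^ 2 - 2 * ⟪X S, m⟫ + ‖m‖ ^ 2 := fun S => by
    exact norm_sub_sq_real _ _
  have h1 : ∑ S ∈ P, ⟪X S, m⟫ = (P.card : ℝ) * ‖m‖ ^ 2 := by
    rw [← sum_inner, ← hm, real_inner_smul_left, real_inner_self_eq_norm_sq]
  calc ∑ S ∈ P, ‖X S - m‖ ^ 2
      = ∑ S ∈ P, (‖X S‖ ^ 2 - 2 * ⟪X S, m⟫ + ‖m‖ ^ 2) := by
        exact Finset.sum_congr rfl fun S _ => expand S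
    _ = ∑ S ∈ P, ‖X S‖ ^ 2 - 2 * ((P.card : ℝ) * ‖m‖ ^ 2) + (P.card : ℝ) * ‖m‖ ^ 2 := by
        rw [Finset.sum_add_distrib, Finset.sum_sub_distrib, ← Finset.mul_sum, h1,
          Finset.sum_const, nsmul_eq_mul]
    _ ≤ ∑ S ∈ P, ‖X S‖ ^ 2 := by
        have hc : (0:ℝ) ≤ (P.card : ℝ) * ‖m‖ ^ 2 := by positivity
        linarith

lemma perS {d n : ℕ} (B : ℕ) (μF : ℝ) (hμF : 0 < μF) (hB1 : 1 ≤ B)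
    (f : Fin n → EuclideanSpace ℝ (Fin d) → ℝ)
    (G : Fin n → EuclideanSpace ℝ (Fin d) → EuclideanSpace ℝ (Fin d))
    (hconv : ∀ i u v, f i v ≥ f i u + ⟪G i u, v - u⟫)
    (w xhat xstar : EuclideanSpace ℝ (Fin d)) (S : Finset (Fin n)) :
    proxyF B μF f G w xhat S xhat - sInf (Set.range (proxyF B μF f G w xhat S))
      ≤ (B:ℝ)⁻¹ * ∑ i ∈ S, f i xhat - (B:ℝ)⁻¹ * ∑ i ∈ S, f i xstar
        - ⟪batchGrad B G S xstar, xhat - xstar⟫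
        + ‖batchGrad B G S xstar + (((n:ℝ)⁻¹ • ∑ i, G i w) - batchGrad B G S w)‖ ^ 2
            / (2 * μF) := by
  have hBR : (0:ℝ) < (B:ℝ) := by exact_mod_cast hB1
  have hlow : (B:ℝ)⁻¹ * ∑ i ∈ S, f i xstar - ⟪batchGrad B G S xstar, xstar⟫
      + ⟪batchGrad B G S xstar + (((n:ℝ)⁻¹ • ∑ i, G i w) - batchGrad B G S w), xhat⟫
      - ‖batchGrad B G S xstar + (((n:ℝ)⁻¹ • ∑ i, G i w) - batchGrad B G S w)‖ ^ 2 / (2 * μF)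
      ≤ sInf (Set.range (proxyF B μF f G w xhat S)) := by
    apply le_csInf ⟨proxyF B μF f G w xhat S xhat, Set.mem_range_self xhat⟩
    rintro y ⟨x, rfl⟩
    have hc : (B:ℝ)⁻¹ * ∑ i ∈ S, f i xstar + ⟪batchGrad B G S xstar, x - xstar⟫
        ≤ (B:ℝ)⁻¹ * ∑ i ∈ S, f i x := by
      have h1 : ∑ i ∈ S, (f i xstar + ⟪G i xstar, x - xstar⟫) ≤ ∑ i ∈ S, f i x :=
        Finset.sum_le_sum fun i _ => hconv i xstar x
      rw [Finset.sum_add_distrib] at h1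
      have h2 : ⟪batchGrad B G S xstar, x - xstar⟫
          = (B:ℝ)⁻¹ * ∑ i ∈ S, ⟪G i xstar, x - xstar⟫ := by
        rw [batchGrad, real_inner_smul_left, sum_inner]
      have h3 := mul_le_mul_of_nonneg_left h1 (inv_nonneg.mpr hBR.le)
      rw [mul_add] at h3
      rw [h2]
      linarith
    set a : EuclideanSpace ℝ (Fin d) :=
      batchGrad B G S xstar + (((n:ℝ)⁻¹ • ∑ i, G i w) - batchGrad B G S w) with ha
    have hq : ⟪a, xhat⟫ - ‖a‖ ^ 2 / (2 * μF) ≤ ⟪a, x⟫ + μF / 2 * ‖x - xhat‖ ^ 2 := by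
      have h3 : ⟪a, x⟫ = ⟪a, xhat⟫ + ⟪a, x - xhat⟫ := by
        rw [← inner_add_right]
        norm_num
      have h4 : -(‖a‖ * ‖x - xhat‖) ≤ ⟪a, x - xhat⟫ :=
        (abs_le.mp (abs_real_inner_le_norm a (x - xhat))).1
      have h5 : ‖a‖ * ‖x - xhat‖ ≤ ‖a‖ ^ 2 / (2 * μF) + μF / 2 * ‖x - xhat‖ ^ 2 := by
        have key2 : ‖a‖ ^ 2 / (2 * μF) + μF / 2 * ‖x - xhat‖ ^ 2 - ‖a‖ * ‖x - xhat‖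
            = (‖a‖ - μF * ‖x - xhat‖) ^ 2 / (2 * μF) := by
          field_simp
          ring
        have key3 : (0:ℝ) ≤ (‖a‖ - μF * ‖x - xhat‖) ^ 2 / (2 * μF) := by positivity
        linarith
      linarith
    have hinner : ⟪a, x⟫ = ⟪batchGrad B G S xstar, x - xstar⟫
        + ⟪batchGrad B G S xstar, xstar⟫
        + ⟪x, ((n:ℝ)⁻¹ • ∑ i, G i w) - batchGrad B G S w⟫ := by
      rw [ha, inner_add_left, inner_sub_right,
        real_inner_comm x (((n:ℝ)⁻¹ • ∑ i, G i w) - batchGrad B G S w)]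
      ring
    show _ ≤ (B:ℝ)⁻¹ * ∑ i ∈ S, f i x
        + ⟪x, ((n:ℝ)⁻¹ • ∑ i, G i w) - batchGrad B G S w⟫ + μF / 2 * ‖x - xhat‖ ^ 2
    linarith
  have hhat : proxyF B μF f G w xhat S xhat
      = (B:ℝ)⁻¹ * ∑ i ∈ S, f i xhat
        + ⟪xhat, ((n:ℝ)⁻¹ • ∑ i, G i w) - batchGrad B G S w⟫ := by
    unfold proxyF
    simp
  have hinner2 : ⟪batchGrad B G S xstar + (((n:ℝ)⁻¹ • ∑ i, G i w) - batchGrad B G S w), xhat⟫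
      = ⟪batchGrad B G S xstar, xhat⟫
        + ⟪xhat, ((n:ℝ)⁻¹ • ∑ i, G i w) - batchGrad B G S w⟫ := by
    rw [inner_add_left, real_inner_comm xhat (((n:ℝ)⁻¹ • ∑ i, G i w) - batchGrad B G S w)]
  have hinner3 : ⟪batchGrad B G S xstar, xhat - xstar⟫
      = ⟪batchGrad B G S xstar, xhat⟫ - ⟪batchGrad B G S xstar, xstar⟫ :=
    inner_sub_right _ _ _
  rw [hhat, hinner3]
  linarith [hlow, hinner2]

theorem stmt_19 {d : ℕ} (n B : ℕ) (hn : 1 ≤ n) (hB1 : 1 ≤ B) (hBn : B ≤ n)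
    (L μF : ℝ) (hL : 0 < L) (hμF : 0 < μF)
    (f : Fin n → EuclideanSpace ℝ (Fin d) → ℝ)
    (G : Fin n → EuclideanSpace ℝ (Fin d) → EuclideanSpace ℝ (Fin d))
    (hgrad : ∀ i y, HasGradientAt (f i) (G i y) y)
    (hconv : ∀ i u v, f i v ≥ f i u + ⟪G i u, v - u⟫)
    (hsmooth : ∀ i u v, ‖G i u - G i v‖ ≤ L * ‖u - v‖)
    (xstar w xhat : EuclideanSpace ℝ (Fin d))
    (hcrit : ((n : ℝ)⁻¹ • ∑ i, G i xstar) = (0 : EuclideanSpace ℝ (Fin d))) :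
    ((n.choose B : ℝ))⁻¹ *
        ∑ S ∈ Finset.powersetCard B (Finset.univ : Finset (Fin n)),
          (proxyF B μF f G w xhat S xhat - sInf (Set.range (proxyF B μF f G w xhat S)))
      ≤ ((n : ℝ)⁻¹ * ∑ i, f i xhat) - ((n : ℝ)⁻¹ * ∑ i, f i xstar) +
        1 / (2 * μF) *
          (((n.choose B : ℝ))⁻¹ *
            ∑ S ∈ Finset.powersetCard B (Finset.univ : Finset (Fin n)),
              ‖batchGrad B G S w - batchGrad B G S xstar‖ ^ 2) := by
  classical
  have hBR : (0:ℝ) < (B:ℝ) := by exact_mod_cast hB1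
  have hnR : (0:ℝ) < (n:ℝ) := by exact_mod_cast hn
  have hNR : (0:ℝ) < (n.choose B : ℝ) := by exact_mod_cast Nat.choose_pos hBn
  have hkey : (n : ℝ) * ((n-1).choose (B-1) : ℝ) = (n.choose B : ℝ) * (B : ℝ) := by
    have h0 := Nat.add_one_mul_choose_eq (n-1) (B-1)
    have h1 : n - 1 + 1 = n := Nat.succ_pred_eq_of_pos hn
    have h2 : B - 1 + 1 = B := Nat.succ_pred_eq_of_pos hB1
    rw [h1, h2] at h0
    exact_mod_cast h0
  have hcoef : ((n.choose B : ℝ))⁻¹ * ((B:ℝ)⁻¹ * ((n-1).choose (B-1) : ℝ)) = (n:ℝ)⁻¹ := by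
    field_simp
    linear_combination hkey
  have hsum0 : ∑ i, G i xstar = (0 : EuclideanSpace ℝ (Fin d)) := by
    rcases smul_eq_zero.mp hcrit with h | h
    · exact absurd h (inv_ne_zero hnR.ne')
    · exact h
  have hbg : ∀ y : EuclideanSpace ℝ (Fin d),
      ∑ S ∈ Finset.powersetCard B (Finset.univ : Finset (Fin n)), batchGrad B G S y
        = ((B:ℝ)⁻¹ * ((n-1).choose (B-1) : ℝ)) • ∑ i, G i y := by
    intro y
    unfold batchGrad
    rw [← Finset.smul_sum, aux_sum hB1, ← Nat.cast_smul_eq_nsmul ℝ, smul_smul]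
  have hbgstar : ∑ S ∈ Finset.powersetCard B (Finset.univ : Finset (Fin n)),
      batchGrad B G S xstar = 0 := by
    rw [hbg, hsum0, smul_zero]
  have hcard : (Finset.powersetCard B (Finset.univ : Finset (Fin n))).card = n.choose B := by
    rw [Finset.card_powersetCard, Finset.card_univ, Fintype.card_fin]
  have hm : (((Finset.powersetCard B (Finset.univ : Finset (Fin n))).card : ℝ))
        • ((n:ℝ)⁻¹ • ∑ i, G i w)
      = ∑ S ∈ Finset.powersetCard B (Finset.univ : Finset (Fin n)),
          (batchGrad B G S w - batchGrad B G S xstar) := by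
    rw [Finset.sum_sub_distrib, hbgstar, sub_zero, hbg w, hcard, smul_smul]
    congr 1
    field_simp
    linear_combination -hkey
  have hper : ∑ S ∈ Finset.powersetCard B (Finset.univ : Finset (Fin n)),
        (proxyF B μF f G w xhat S xhat - sInf (Set.range (proxyF B μF f G w xhat S)))
      ≤ ∑ S ∈ Finset.powersetCard B (Finset.univ : Finset (Fin n)),
          ((B:ℝ)⁻¹ * ∑ i ∈ S, f i xhat - (B:ℝ)⁻¹ * ∑ i ∈ S, f i xstar
            - ⟪batchGrad B G S xstar, xhat - xstar⟫
            + ‖batchGrad B G S xstar + (((n:ℝ)⁻¹ • ∑ i, G i w) - batchGrad B G S w)‖ ^ 2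
                / (2 * μF)) :=
    Finset.sum_le_sum fun S _ => perS B μF hμF hB1 f G hconv w xhat xstar S
  have e1 : ∀ y : EuclideanSpace ℝ (Fin d),
      ∑ S ∈ Finset.powersetCard B (Finset.univ : Finset (Fin n)), (B:ℝ)⁻¹ * ∑ i ∈ S, f i y
        = (B:ℝ)⁻¹ * (((n-1).choose (B-1) : ℝ) * ∑ i, f i y) := by
    intro y
    rw [← Finset.mul_sum, aux_sum hB1, nsmul_eq_mul]
  have e3 : ∑ S ∈ Finset.powersetCard B (Finset.univ : Finset (Fin n)),
      ⟪batchGrad B G S xstar, xhat - xstar⟫ = 0 := by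
    rw [← sum_inner, hbgstar, inner_zero_left]
  have e4 : ∑ S ∈ Finset.powersetCard B (Finset.univ : Finset (Fin n)),
        ‖batchGrad B G S xstar + (((n:ℝ)⁻¹ • ∑ i, G i w) - batchGrad B G S w)‖ ^ 2
      ≤ ∑ S ∈ Finset.powersetCard B (Finset.univ : Finset (Fin n)),
          ‖batchGrad B G S w - batchGrad B G S xstar‖ ^ 2 := by
    have hrw : ∀ S : Finset (Fin n),
        ‖batchGrad B G S xstar + (((n:ℝ)⁻¹ • ∑ i, G i w) - batchGrad B G S w)‖
          = ‖(batchGrad B G S w - batchGrad B G S xstar) - (n:ℝ)⁻¹ • ∑ i, G i w‖ := by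
      intro S
      rw [← norm_neg]
      congr 1
      abel
    calc ∑ S ∈ Finset.powersetCard B (Finset.univ : Finset (Fin n)),
          ‖batchGrad B G S xstar + (((n:ℝ)⁻¹ • ∑ i, G i w) - batchGrad B G S w)‖ ^ 2
        = ∑ S ∈ Finset.powersetCard B (Finset.univ : Finset (Fin n)),
            ‖(batchGrad B G S w - batchGrad B G S xstar) - (n:ℝ)⁻¹ • ∑ i, G i w‖ ^ 2 :=
          Finset.sum_congr rfl fun S _ => by rw [hrw S]
      _ ≤ _ := aux_var _ _ _ hm
  have expand : ∑ S ∈ Finset.powersetCard B (Finset.univ : Finset (Fin n)),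
        ((B:ℝ)⁻¹ * ∑ i ∈ S, f i xhat - (B:ℝ)⁻¹ * ∑ i ∈ S, f i xstar
          - ⟪batchGrad B G S xstar, xhat - xstar⟫
          + ‖batchGrad B G S xstar + (((n:ℝ)⁻¹ • ∑ i, G i w) - batchGrad B G S w)‖ ^ 2
              / (2 * μF))
      = (B:ℝ)⁻¹ * (((n-1).choose (B-1) : ℝ) * ∑ i, f i xhat)
        - (B:ℝ)⁻¹ * (((n-1).choose (B-1) : ℝ) * ∑ i, f i xstar)
        + (∑ S ∈ Finset.powersetCard B (Finset.univ : Finset (Fin n)),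
            ‖batchGrad B G S xstar + (((n:ℝ)⁻¹ • ∑ i, G i w) - batchGrad B G S w)‖ ^ 2)
            / (2 * μF) := by
    rw [Finset.sum_add_distrib, Finset.sum_sub_distrib, Finset.sum_sub_distrib,
      e1 xhat, e1 xstar, e3, ← Finset.sum_div]
    ring
  have step1 := mul_le_mul_of_nonneg_left hper (inv_nonneg.mpr hNR.le)
  rw [expand] at step1
  have h7 : ∀ y : EuclideanSpace ℝ (Fin d),
      ((n.choose B : ℝ))⁻¹ * ((B:ℝ)⁻¹ * (((n-1).choose (B-1) : ℝ) * ∑ i, f i y))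
        = (n:ℝ)⁻¹ * ∑ i, f i y := by
    intro y
    calc ((n.choose B : ℝ))⁻¹ * ((B:ℝ)⁻¹ * (((n-1).choose (B-1) : ℝ) * ∑ i, f i y))
        = ((n.choose B : ℝ))⁻¹ * ((B:ℝ)⁻¹ * ((n-1).choose (B-1) : ℝ)) * ∑ i, f i y := by ring
      _ = (n:ℝ)⁻¹ * ∑ i, f i y := by rw [hcoef]
  have h6 : ((n.choose B : ℝ))⁻¹ *
        ((∑ S ∈ Finset.powersetCard B (Finset.univ : Finset (Fin n)),
          ‖batchGrad B G S xstar + (((n:ℝ)⁻¹ • ∑ i, G i w) - batchGrad B G S w)‖ ^ 2) / (2 * μF))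
      ≤ 1 / (2 * μF) * (((n.choose B : ℝ))⁻¹ *
          ∑ S ∈ Finset.powersetCard B (Finset.univ : Finset (Fin n)),
            ‖batchGrad B G S w - batchGrad B G S xstar‖ ^ 2) := by
    have hc2 : (0:ℝ) ≤ ((n.choose B : ℝ))⁻¹ / (2 * μF) := by positivity
    calc ((n.choose B : ℝ))⁻¹ *
          ((∑ S ∈ Finset.powersetCard B (Finset.univ : Finset (Fin n)),
            ‖batchGrad B G S xstar + (((n:ℝ)⁻¹ • ∑ i, G i w) - batchGrad B G S w)‖ ^ 2)
            / (2 * μF))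
        = ((n.choose B : ℝ))⁻¹ / (2 * μF) *
            ∑ S ∈ Finset.powersetCard B (Finset.univ : Finset (Fin n)),
              ‖batchGrad B G S xstar + (((n:ℝ)⁻¹ • ∑ i, G i w) - batchGrad B G S w)‖ ^ 2 := by
          ring
      _ ≤ ((n.choose B : ℝ))⁻¹ / (2 * μF) *
            ∑ S ∈ Finset.powersetCard B (Finset.univ : Finset (Fin n)),
              ‖batchGrad B G S w - batchGrad B G S xstar‖ ^ 2 :=
          mul_le_mul_of_nonneg_left e4 hc2
      _ = 1 / (2 * μF) * (((n.choose B : ℝ))⁻¹ *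
            ∑ S ∈ Finset.powersetCard B (Finset.univ : Finset (Fin n)),
              ‖batchGrad B G S w - batchGrad B G S xstar‖ ^ 2) := by ring
  calc ((n.choose B : ℝ))⁻¹ *
        ∑ S ∈ Finset.powersetCard B (Finset.univ : Finset (Fin n)),
          (proxyF B μF f G w xhat S xhat - sInf (Set.range (proxyF B μF f G w xhat S)))
      ≤ ((n.choose B : ℝ))⁻¹ *
          ((B:ℝ)⁻¹ * (((n-1).choose (B-1) : ℝ) * ∑ i, f i xhat)
            - (B:ℝ)⁻¹ * (((n-1).choose (B-1) : ℝ) * ∑ i, f i xstar)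
            + (∑ S ∈ Finset.powersetCard B (Finset.univ : Finset (Fin n)),
                ‖batchGrad B G S xstar + (((n:ℝ)⁻¹ • ∑ i, G i w) - batchGrad B G S w)‖ ^ 2)
                / (2 * μF)) := step1
    _ = ((n.choose B : ℝ))⁻¹ * ((B:ℝ)⁻¹ * (((n-1).choose (B-1) : ℝ) * ∑ i, f i xhat))
        - ((n.choose B : ℝ))⁻¹ * ((B:ℝ)⁻¹ * (((n-1).choose (B-1) : ℝ) * ∑ i, f i xstar))
        + ((n.choose B : ℝ))⁻¹ *
            ((∑ S ∈ Finset.powersetCard B (Finset.univ : Finset (Fin n)),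
              ‖batchGrad B G S xstar + (((n:ℝ)⁻¹ • ∑ i, G i w) - batchGrad B G S w)‖ ^ 2)
              / (2 * μF)) := by ring
    _ ≤ ((n : ℝ)⁻¹ * ∑ i, f i xhat) - ((n : ℝ)⁻¹ * ∑ i, f i xstar) +
        1 / (2 * μF) *
          (((n.choose B : ℝ))⁻¹ *
            ∑ S ∈ Finset.powersetCard B (Finset.univ : Finset (Fin n)),
              ‖batchGrad B G S w - batchGrad B G S xstar‖ ^ 2) := by
        rw [h7 xhat, h7 xstar]
        linarith [h6]
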